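/- Let a₁, …, a_m be pairwise distinct real numbers and let I ⊆ ℝ be a nonempty open interval such that |E − a_j| < 2 for every E ∈ I and every j = 1, …, m. For E ∈ I set φ_j(E) = arccos((E − a_j)/2). Then the set of E ∈ I for which there exist a nonzero integer vector w ∈ ℤ^m and an integer k with ∑_{j=1}^m w_j·φ_j(E) = 2πk has Lebesgue measure zero. -/

import Mathlib

open MeasureTheory

/-- A set of reals all of whose points are isolated (in the `ε` sense) is countable. -/
lemma aux_countable_of_isolated {S : Set ℝ}
    (h : ∀ x ∈ S, ∃ ε > 0, ∀ y ∈ S, |y - x| < ε → y = x) : S.Countable := by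
  have key : ∀ x : S, ∃ q : ℚ × ℚ, (q.1 : ℝ) < x ∧ (x : ℝ) < q.2 ∧
      ∀ y ∈ S, (q.1 : ℝ) < y → y < q.2 → y = x := by
    rintro ⟨x, hx⟩
    obtain ⟨ε, hε, hiso⟩ := h x hx
    obtain ⟨q1, hq1, hq1'⟩ := exists_rat_btwn (show x - ε < x by linarith)
    obtain ⟨q2, hq2, hq2'⟩ := exists_rat_btwn (show x < x + ε by linarith)
    refine ⟨(q1, q2), hq1', hq2, fun y hy h1 h2 => hiso y hy ?_⟩
    rw [abs_lt]
    constructor <;> linarith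
  choose f hf1 hf2 hf3 using key
  have hinj : Function.Injective f := by
    intro x y hxy
    have h1 : ((f x).1 : ℝ) < (y : ℝ) := by rw [hxy]; exact hf1 y
    have h2 : ((y : ℝ)) < (f x).2 := by rw [hxy]; exact hf2 y
    exact Subtype.ext ((hf3 x y.1 y.2 h1 h2).symm)
  have : Countable S := hinj.countable
  exact Set.countable_coe_iff.mp this

/-- Real analyticity of `E ↦ (√(4 - (E - c)²))⁻¹` where the radicand is positive. -/
lemma aux_analyticAt_inv_sqrt (c : ℝ) {x : ℝ} (hx : 0 < 4 - (x - c) ^ 2) :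
    AnalyticAt ℝ (fun E : ℝ => (Real.sqrt (4 - (E - c) ^ 2))⁻¹) x := by
  set G : ℂ → ℂ := fun z => Complex.exp (Complex.log (4 - (z - (c : ℂ)) ^ 2) * (-1 / 2)) with hG
  have hpoly : AnalyticAt ℂ (fun z : ℂ => 4 - (z - (c : ℂ)) ^ 2) (x : ℂ) :=
    analyticAt_const.sub ((analyticAt_id.sub analyticAt_const).pow 2)
  have hbase : ((4 : ℂ) - ((x : ℂ) - (c : ℂ)) ^ 2) ∈ Complex.slitPlane := by
    rw [show ((4 : ℂ) - ((x : ℂ) - (c : ℂ)) ^ 2) = ((4 - (x - c) ^ 2 : ℝ) : ℂ) by push_cast; ring]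
    exact Complex.ofReal_mem_slitPlane.2 hx
  have hGa : AnalyticAt ℂ G (x : ℂ) := ((hpoly.clog hbase).mul analyticAt_const).cexp
  have hFa : AnalyticAt ℝ (fun E : ℝ => (G (E : ℂ)).re) x := by
    have h1 : AnalyticAt ℝ (fun E : ℝ => G ((E : ℝ) : ℂ)) x :=
      hGa.restrictScalars.comp (Complex.ofRealCLM.analyticAt x)
    exact (Complex.reCLM.analyticAt _).comp h1
  apply hFa.congr
  have hopen : {E : ℝ | 0 < 4 - (E - c) ^ 2} ∈ nhds x := by
    have hcont : Continuous fun E : ℝ => 4 - (E - c) ^ 2 := by continuity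
    exact (isOpen_lt continuous_const hcont).mem_nhds hx
  filter_upwards [hopen] with E hE
  show (G (E : ℂ)).re = (Real.sqrt (4 - (E - c) ^ 2))⁻¹
  set t : ℝ := 4 - (E - c) ^ 2 with ht
  have h4 : ((4 : ℂ) - ((E : ℂ) - (c : ℂ)) ^ 2) = ((t : ℝ) : ℂ) := by rw [ht]; push_cast; ring
  rw [hG]
  simp only [h4]
  rw [← Complex.ofReal_log hE.le,
    show ((Real.log t : ℂ)) * (-1 / 2) = ((Real.log t * (-1 / 2) : ℝ) : ℂ) by push_cast; ring,
    ← Complex.ofReal_exp, Complex.ofReal_re]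
  have hst : 0 < Real.sqrt t := Real.sqrt_pos.2 hE
  rw [← Real.exp_log hst, ← Real.exp_neg, Real.log_sqrt hE.le]
  congr 1
  ring

/-- Derivative of `E ↦ arccos ((E - c)/2)`. -/
lemma aux_hasDerivAt_arccos_affine (c E : ℝ) (h : |E - c| < 2) :
    HasDerivAt (fun E : ℝ => Real.arccos ((E - c) / 2))
      (-(Real.sqrt (4 - (E - c) ^ 2))⁻¹) E := by
  have habs := abs_lt.1 h
  have h1 : (E - c) / 2 ≠ -1 := by intro hh; nlinarith [hh]
  have h2 : (E - c) / 2 ≠ 1 := by intro hh; nlinarith [hh]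
  have hinner : HasDerivAt (fun E : ℝ => (E - c) / 2) (1 / 2) E := by
    simpa using ((hasDerivAt_id E).sub_const c).div_const 2
  have hcomp := (Real.hasDerivAt_arccos h1 h2).comp E hinner
  have heq : (fun x : ℝ => Real.arccos ((x - c) / 2)) =
      Real.arccos ∘ fun E : ℝ => (E - c) / 2 := rfl
  rw [heq]
  refine hcomp.congr_deriv ?_
  have hsq : ((E - c) / 2) ^ 2 < 1 := by nlinarith
  have hkey : Real.sqrt (4 - (E - c) ^ 2) = 2 * Real.sqrt (1 - ((E - c) / 2) ^ 2) := by
    rw [show (4 - (E - c) ^ 2 : ℝ) = 4 * (1 - ((E - c) / 2) ^ 2) by ring,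
      show (4 : ℝ) = 2 ^ 2 by norm_num, Real.sqrt_mul (by positivity),
      Real.sqrt_sq (by norm_num : (0:ℝ) ≤ 2)]
  have hspos : 0 < Real.sqrt (1 - ((E - c) / 2) ^ 2) := Real.sqrt_pos.2 (by nlinarith)
  rw [hkey]
  field_simp

set_option maxHeartbeats 2000000 in
/-- The set of energies in `I` at which some nonzero integer combination of the
phases `arccos((E − a_j)/2)` is an integer multiple of `2π` is a Lebesgue null
set. -/
theorem stmt_6 {m : ℕ} (a : Fin m → ℝ) (ha : Function.Injective a)
    (lo hi : ℝ) (hlohi : lo < hi)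
    (hI : ∀ E ∈ Set.Ioo lo hi, ∀ j, |E - a j| < 2) :
    volume {E : ℝ | E ∈ Set.Ioo lo hi ∧ ∃ w : Fin m → ℤ, w ≠ 0 ∧ ∃ k : ℤ,
        (∑ j, (w j : ℝ) * Real.arccos ((E - a j) / 2)) = 2 * Real.pi * k} = 0 := by
  have main : ∀ (w : Fin m → ℤ) (k : ℤ), w ≠ 0 →
      volume {E : ℝ | E ∈ Set.Ioo lo hi ∧
        (∑ j, (w j : ℝ) * Real.arccos ((E - a j) / 2)) = 2 * Real.pi * k} = 0 := by
    intro w k hw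
    obtain ⟨j0, hj0⟩ : ∃ j, w j ≠ 0 := by
      by_contra hc; push_neg at hc; exact hw (funext hc)
    set cst : ℝ := 2 * Real.pi * k with hcst
    set h : ℝ → ℝ := fun E => ∑ j, (w j : ℝ) * Real.arccos ((E - a j) / 2) with hh
    set T : Finset (Fin m) := Finset.univ.filter (fun j => w j ≠ 0) with hT
    have hmemT : ∀ j, j ∈ T ↔ w j ≠ 0 := by intro j; simp [hT]
    have hj0T : j0 ∈ T := (hmemT j0).2 hj0
    obtain ⟨j1, hj1T, hj1min⟩ := T.exists_min_image a ⟨j0, hj0T⟩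
    set v : Fin m → ℝ → ℝ := fun j E => (Real.sqrt (4 - (E - a j) ^ 2))⁻¹ with hv
    set g : ℝ → ℝ := fun E => ∑ j ∈ T, (w j : ℝ) * v j E with hg
    set D : Set ℝ := ⋂ j ∈ T, Set.Ioo (a j - 2) (a j + 2) with hD
    have hDopen : IsOpen D := isOpen_biInter_finset fun j _ => isOpen_Ioo
    have hDpre : IsPreconnected D :=
      (convex_iInter₂ fun j _ => convex_Ioo _ _).isPreconnected
    have hID : Set.Ioo lo hi ⊆ D := by
      intro E hE
      rw [hD]
      refine Set.mem_iInter₂.2 fun j _ => ?_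
      have := abs_lt.1 (hI E hE j)
      exact ⟨by linarith [this.1], by linarith [this.2]⟩
    have hpos : ∀ E ∈ D, ∀ j ∈ T, 0 < 4 - (E - a j) ^ 2 := by
      intro E hE j hj
      rw [hD] at hE
      have := Set.mem_iInter₂.1 hE j hj
      obtain ⟨h1, h2⟩ := this
      nlinarith
    have hganal : AnalyticOnNhd ℝ g D := by
      intro x hxD
      apply T.analyticAt_fun_sum
      intro j hj
      exact analyticAt_const.mul (aux_analyticAt_inv_sqrt (a j) (hpos x hxD j hj))
    have hderiv : ∀ x ∈ Set.Ioo lo hi, HasDerivAt h (-(g x)) x := by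
      intro x hx
      have hterm : ∀ j ∈ Finset.univ, HasDerivAt
          (fun E : ℝ => (w j : ℝ) * Real.arccos ((E - a j) / 2))
          ((w j : ℝ) * (-(v j x))) x := fun j _ =>
        (aux_hasDerivAt_arccos_affine (a j) x (hI x hx j)).const_mul _
      have hsum := HasDerivAt.fun_sum hterm
      have hval : ∑ j, (w j : ℝ) * (-(v j x)) = -(g x) := by
        simp only [hg]
        have hTuniv : ∑ j ∈ T, (w j : ℝ) * v j x = ∑ j, (w j : ℝ) * v j x :=
          Finset.sum_subset (Finset.subset_univ T) (fun j _ hj => by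
            have hwj : w j = 0 := by simpa [hT] using hj
            simp [hwj])
        rw [hTuniv, ← Finset.sum_neg_distrib]
        exact Finset.sum_congr rfl fun j _ => by ring
      rw [← hval]
      exact hsum
    -- a point of D where g is nonzero
    set E0 : ℝ := (lo + hi) / 2 with hE0
    have hE0I : E0 ∈ Set.Ioo lo hi := ⟨by rw [hE0]; linarith, by rw [hE0]; linarith⟩
    have hE0a : ∀ j, |E0 - a j| < 2 := fun j => hI E0 hE0I j
    have hE0cc : E0 < a j1 + 2 := by have := abs_lt.1 (hE0a j1); linarith [this.1]
    have hbound : ∀ j : Fin m, ∃ Mj : ℝ, 0 ≤ Mj ∧ (j ∈ T → j ≠ j1 →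
        ∀ E, E0 ≤ E → E < a j1 + 2 → v j E ≤ Mj) := by
      intro j
      by_cases hj : j ∈ T ∧ j ≠ j1
      · obtain ⟨hjT, hjne⟩ := hj
        have haj : a j1 < a j :=
          lt_of_le_of_ne (hj1min j hjT) (fun hh => hjne (ha hh).symm)
        set b : ℝ := max (max (2 - (a j - a j1)) (a j - E0)) 0 with hb
        have hb2 : b < 2 := by
          have h1 := abs_lt.1 (hE0a j)
          rw [hb]
          exact max_lt (max_lt (by linarith) (by linarith [h1.1])) (by norm_num)
        have hb0 : (0:ℝ) ≤ b := le_max_right _ _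
        have h4b : (0:ℝ) < 4 - b ^ 2 := by nlinarith
        refine ⟨(Real.sqrt (4 - b ^ 2))⁻¹, by positivity, fun _ _ E hE1 hE2 => ?_⟩
        have habsE : |E - a j| ≤ b := by
          rw [abs_le']
          constructor
          · calc E - a j ≤ 2 - (a j - a j1) := by linarith
              _ ≤ b := le_trans (le_max_left _ _) (le_max_left _ _)
          · calc -(E - a j) ≤ a j - E0 := by linarith
              _ ≤ b := le_trans (le_max_right _ _) (le_max_left _ _)
        have hsq : (E - a j) ^ 2 ≤ b ^ 2 := by
          nlinarith [abs_nonneg (E - a j), sq_abs (E - a j)]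
        have hle : Real.sqrt (4 - b ^ 2) ≤ Real.sqrt (4 - (E - a j) ^ 2) :=
          Real.sqrt_le_sqrt (by linarith)
        exact inv_anti₀ (Real.sqrt_pos.2 h4b) hle
      · exact ⟨0, le_rfl, fun h1 h2 => absurd ⟨h1, h2⟩ hj⟩
    choose Mf hMf0 hMfb using hbound
    set M : ℝ := ∑ j ∈ T.erase j1, |(w j : ℝ)| * Mf j with hM
    have hM0 : 0 ≤ M := by
      rw [hM]
      exact Finset.sum_nonneg fun j _ => mul_nonneg (abs_nonneg _) (hMf0 j)
    set δ : ℝ := ((M + 1)⁻¹) ^ 2 with hδ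
    have hδ0 : 0 < δ := by rw [hδ]; positivity
    set s : ℝ := min ((a j1 + 2 - E0) / 2) (δ / 4) with hs
    have hs0 : 0 < s := by rw [hs]; exact lt_min (by linarith) (by linarith)
    have hsle : s ≤ (a j1 + 2 - E0) / 2 := by rw [hs]; exact min_le_left _ _
    have hs4 : s ≤ δ / 4 := by rw [hs]; exact min_le_right _ _
    have hs2 : s < 2 := by
      have h1 := abs_lt.1 (hE0a j1)
      linarith [h1.1]
    set Estar : ℝ := a j1 + 2 - s with hEstar
    have hE0Estar : E0 ≤ Estar := by rw [hEstar]; linarith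
    have hEstarcc : Estar < a j1 + 2 := by rw [hEstar]; linarith
    have hEstarD : Estar ∈ D := by
      rw [hD]
      refine Set.mem_iInter₂.2 fun j hj => ?_
      constructor
      · have := abs_lt.1 (hE0a j); linarith [this.1]
      · have := hj1min j hj; linarith
    have hdiff : Estar - a j1 = 2 - s := by rw [hEstar]; ring
    have hupos : 0 < 4 - (Estar - a j1) ^ 2 := by rw [hdiff]; nlinarith
    have huδ : 4 - (Estar - a j1) ^ 2 ≤ δ := by rw [hdiff]; nlinarith
    have hvlarge : M + 1 ≤ v j1 Estar := by
      have hsqle : Real.sqrt (4 - (Estar - a j1) ^ 2) ≤ (M + 1)⁻¹ := by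
        have hδs : Real.sqrt δ = (M + 1)⁻¹ := by
          rw [hδ, Real.sqrt_sq (by positivity)]
        calc Real.sqrt (4 - (Estar - a j1) ^ 2) ≤ Real.sqrt δ := Real.sqrt_le_sqrt huδ
          _ = (M + 1)⁻¹ := hδs
      have hsp : 0 < Real.sqrt (4 - (Estar - a j1) ^ 2) := Real.sqrt_pos.2 hupos
      have hfin := inv_anti₀ hsp hsqle
      rw [inv_inv] at hfin
      exact hfin
    have hgEstar : g Estar ≠ 0 := by
      intro h0
      have hvnonneg : ∀ j, 0 ≤ v j Estar := fun j => by
        rw [hv]; positivity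
      have hsplit : g Estar =
          (w j1 : ℝ) * v j1 Estar + ∑ j ∈ T.erase j1, (w j : ℝ) * v j Estar := by
        simp only [hg]
        exact (Finset.add_sum_erase T _ hj1T).symm
      have hrest : |∑ j ∈ T.erase j1, (w j : ℝ) * v j Estar| ≤ M := by
        calc |∑ j ∈ T.erase j1, (w j : ℝ) * v j Estar|
            ≤ ∑ j ∈ T.erase j1, |(w j : ℝ) * v j Estar| :=
              Finset.abs_sum_le_sum_abs _ _
          _ ≤ M := by
              rw [hM]
              refine Finset.sum_le_sum fun j hj => ?_
              have hjT := Finset.mem_of_mem_erase hj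
              have hjne := Finset.ne_of_mem_erase hj
              rw [abs_mul, abs_of_nonneg (hvnonneg j)]
              exact mul_le_mul_of_nonneg_left
                (hMfb j hjT hjne Estar hE0Estar hEstarcc) (abs_nonneg _)
      have hw1 : (1:ℝ) ≤ |(w j1 : ℝ)| := by
        have h1 : (1:ℤ) ≤ |w j1| := Int.one_le_abs ((hmemT j1).1 hj1T)
        calc (1:ℝ) = ((1:ℤ) : ℝ) := by norm_num
          _ ≤ ((|w j1| : ℤ) : ℝ) := by exact_mod_cast h1
          _ = |(w j1 : ℝ)| := by push_cast; ring
      have h1 : (w j1 : ℝ) * v j1 Estar = -∑ j ∈ T.erase j1, (w j : ℝ) * v j Estar := by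
        linarith [hsplit]
      have h2 : |(w j1 : ℝ) * v j1 Estar| ≤ M := by rw [h1, abs_neg]; exact hrest
      have h3 : v j1 Estar ≤ |(w j1 : ℝ) * v j1 Estar| := by
        rw [abs_mul, abs_of_nonneg (hvnonneg j1)]
        nlinarith [hvnonneg j1]
      linarith
    -- the zero set of g is countable
    have hZcnt : {E : ℝ | E ∈ D ∧ g E = 0}.Countable := by
      apply aux_countable_of_isolated
      rintro x ⟨hxD, hgx⟩
      by_contra hcon
      push_neg at hcon
      have hfreq : ∃ᶠ y in nhdsWithin x {x}ᶜ, g y = 0 := by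
        rw [(Metric.nhdsWithin_basis_ball).frequently_iff]
        intro ε hε
        obtain ⟨y, hyZ, hyd, hyne⟩ := hcon ε hε
        exact ⟨y, ⟨by rwa [Metric.mem_ball, Real.dist_eq], by simpa using hyne⟩, hyZ.2⟩
      have hEq : Set.EqOn g 0 D :=
        hganal.eqOn_zero_of_preconnected_of_frequently_eq_zero hDpre hxD hfreq
      exact hgEstar (hEq hEstarD)
    -- the level set of h is countable
    have hScnt : {E : ℝ | E ∈ Set.Ioo lo hi ∧ h E = cst}.Countable := by
      have hc2 : {E : ℝ | (E ∈ Set.Ioo lo hi ∧ h E = cst) ∧ g E ≠ 0}.Countable := by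
        apply aux_countable_of_isolated
        rintro x ⟨⟨hxI, hxval⟩, hgx⟩
        have hne : ∀ᶠ y in nhdsWithin x {x}ᶜ, h y ≠ h x :=
          (hderiv x hxI).eventually_ne (neg_ne_zero.2 hgx)
        rw [(Metric.nhdsWithin_basis_ball).eventually_iff] at hne
        obtain ⟨ε, hε, hball⟩ := hne
        refine ⟨ε, hε, fun y hy hyd => ?_⟩
        by_contra hyne
        have hcontra : h y ≠ h x :=
          hball ⟨by rwa [Metric.mem_ball, Real.dist_eq], by simpa using hyne⟩
        exact hcontra (by rw [hy.1.2, hxval])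
      have hsub2 : {E : ℝ | E ∈ Set.Ioo lo hi ∧ h E = cst} ⊆
          {E : ℝ | E ∈ D ∧ g E = 0} ∪
          {E : ℝ | (E ∈ Set.Ioo lo hi ∧ h E = cst) ∧ g E ≠ 0} := by
        intro x hx
        by_cases hgx : g x = 0
        · exact Or.inl ⟨hID hx.1, hgx⟩
        · exact Or.inr ⟨hx, hgx⟩
      exact Set.Countable.mono hsub2 (hZcnt.union hc2)
    have hsets : {E : ℝ | E ∈ Set.Ioo lo hi ∧
        (∑ j, (w j : ℝ) * Real.arccos ((E - a j) / 2)) = 2 * Real.pi * k} =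
        {E : ℝ | E ∈ Set.Ioo lo hi ∧ h E = cst} := rfl
    rw [hsets]
    exact hScnt.measure_zero volume
  have hsub : {E : ℝ | E ∈ Set.Ioo lo hi ∧ ∃ w : Fin m → ℤ, w ≠ 0 ∧ ∃ k : ℤ,
        (∑ j, (w j : ℝ) * Real.arccos ((E - a j) / 2)) = 2 * Real.pi * k} ⊆
      ⋃ p : (Fin m → ℤ) × ℤ, {E : ℝ | (E ∈ Set.Ioo lo hi ∧ p.1 ≠ 0) ∧
        (∑ j, (p.1 j : ℝ) * Real.arccos ((E - a j) / 2)) = 2 * Real.pi * p.2} := by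
    rintro E ⟨hE, w, hw, k, hk⟩
    exact Set.mem_iUnion.2 ⟨(w, k), ⟨hE, hw⟩, hk⟩
  refine measure_mono_null hsub (measure_iUnion_null fun p => ?_)
  by_cases hp : p.1 = 0
  · have hempty : {E : ℝ | (E ∈ Set.Ioo lo hi ∧ p.1 ≠ 0) ∧
        (∑ j, (p.1 j : ℝ) * Real.arccos ((E - a j) / 2)) = 2 * Real.pi * p.2} = ∅ := by
      ext E
      simp only [Set.mem_setOf_eq, Set.mem_empty_iff_false, iff_false]
      rintro ⟨⟨_, h2⟩, _⟩; exact h2 hp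
    rw [hempty]; exact measure_empty
  · refine measure_mono_null ?_ (main p.1 p.2 hp)
    intro E hE
    exact ⟨hE.1.1, hE.2⟩
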